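/- Let n ≥ 2 and let A be an n×n nonnegative real matrix that is fully indecomposable. Then A is two-fold irreducible, i.e. both A and AᵀA are irreducible. -/

import Mathlib

open Matrix
open scoped Classical

/-- A nonnegative matrix is irreducible if for every pair (i,j) some power has a
positive (i,j) entry. -/
def MatIrred {n : ℕ} (A : Matrix (Fin n) (Fin n) ℝ) : Prop :=
  ∀ i j : Fin n, ∃ m : ℕ, 0 < m ∧ 0 < (A ^ m) i j

/-- A nonnegative matrix is primitive if some power has all entries positive. -/
def MatPrimitive {n : ℕ} (A : Matrix (Fin n) (Fin n) ℝ) : Prop :=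
  ∃ m : ℕ, 0 < m ∧ ∀ i j : Fin n, 0 < (A ^ m) i j

/-- A square matrix is fully indecomposable if there are no nonempty index sets
S, T with |S| + |T| = n and A_{ij} = 0 for all i ∈ S, j ∈ T. -/
def FullyIndec {n : ℕ} (A : Matrix (Fin n) (Fin n) ℝ) : Prop :=
  ¬ ∃ S T : Finset (Fin n), S.Nonempty ∧ T.Nonempty ∧ S.card + T.card = n ∧
      ∀ i ∈ S, ∀ j ∈ T, A i j = 0

lemma myPowNonneg {n : ℕ} {A : Matrix (Fin n) (Fin n) ℝ} (hA : ∀ i j, 0 ≤ A i j) :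
    ∀ m, ∀ i j, 0 ≤ (A ^ m) i j := by
  intro m
  induction m with
  | zero =>
    intro i j
    rw [pow_zero]
    by_cases h : i = j <;> simp [Matrix.one_apply, h]
  | succ m ih =>
    intro i j
    rw [pow_succ, Matrix.mul_apply]
    exact Finset.sum_nonneg fun k _ => mul_nonneg (ih i k) (hA k j)

lemma myMulPos {n : ℕ} {M N : Matrix (Fin n) (Fin n) ℝ}
    (hM : ∀ i j, 0 ≤ M i j) (hN : ∀ i j, 0 ≤ N i j) {i k j : Fin n}
    (h1 : 0 < M i k) (h2 : 0 < N k j) : 0 < (M * N) i j := by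
  rw [Matrix.mul_apply]
  exact Finset.sum_pos' (fun l _ => mul_nonneg (hM i l) (hN l j))
    ⟨k, Finset.mem_univ k, mul_pos h1 h2⟩

lemma myExpand {n : ℕ} {M : Matrix (Fin n) (Fin n) ℝ} (hfi : FullyIndec M)
    {S : Finset (Fin n)} (hS : S.Nonempty) (hcard : S.card < n) :
    S.card < (Finset.univ.filter (fun k => ∃ i ∈ S, M i k ≠ 0)).card := by
  by_contra h
  push_neg at h
  set N := Finset.univ.filter (fun k => ∃ i ∈ S, M i k ≠ 0) with hN
  have hcompl : n - S.card ≤ Nᶜ.card := by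
    rw [Finset.card_compl, Fintype.card_fin]
    omega
  obtain ⟨T, hTsub, hTcard⟩ := Finset.exists_subset_card_eq hcompl
  apply hfi
  refine ⟨S, T, hS, ?_, by omega, ?_⟩
  · rw [← Finset.card_pos, hTcard]; omega
  · intro i hi j hj
    have hjN : j ∉ N := Finset.mem_compl.mp (hTsub hj)
    by_contra hz
    exact hjN (Finset.mem_filter.mpr ⟨Finset.mem_univ j, ⟨i, hi, hz⟩⟩)

lemma myReach {n : ℕ} {A : Matrix (Fin n) (Fin n) ℝ}
    (hA : ∀ i j, 0 ≤ A i j) (hfi : FullyIndec A) :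
    ∀ i j : Fin n, i ≠ j → ∃ m : ℕ, 0 < m ∧ 0 < (A ^ m) i j := by
  intro i j hij
  by_contra h
  push_neg at h
  set S := insert i (Finset.univ.filter fun b => ∃ m : ℕ, 0 < m ∧ 0 < (A ^ m) i b) with hSdef
  have hjS : j ∉ S := by
    simp only [hSdef, Finset.mem_insert, Finset.mem_filter, Finset.mem_univ, true_and]
    rintro (rfl | ⟨m, hm, hpos⟩)
    · exact hij rfl
    · exact absurd hpos (not_lt.mpr (h m hm))
  have hScompl : Sᶜ.Nonempty := ⟨j, Finset.mem_compl.mpr hjS⟩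
  apply hfi
  refine ⟨S, Sᶜ, ⟨i, Finset.mem_insert_self i _⟩, hScompl, ?_, ?_⟩
  · have := Finset.card_add_card_compl S
    rwa [Fintype.card_fin] at this
  · intro a ha b hb
    by_contra hz
    have hab : 0 < A a b := lt_of_le_of_ne (hA a b) (Ne.symm hz)
    have hbS : b ∈ S := by
      rcases Finset.mem_insert.mp ha with rfl | ha'
      · exact Finset.mem_insert_of_mem (Finset.mem_filter.mpr
          ⟨Finset.mem_univ b, 1, one_pos, by rwa [pow_one]⟩)
      · obtain ⟨-, m, hm, hpos⟩ := Finset.mem_filter.mp ha'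
        refine Finset.mem_insert_of_mem (Finset.mem_filter.mpr
          ⟨Finset.mem_univ b, m + 1, Nat.succ_pos m, ?_⟩)
        rw [pow_succ]
        exact myMulPos (myPowNonneg hA m) hA hpos hab
    exact (Finset.mem_compl.mp hb) hbS

lemma myIrred {n : ℕ} (hn : 2 ≤ n) {A : Matrix (Fin n) (Fin n) ℝ}
    (hA : ∀ i j, 0 ≤ A i j) (hfi : FullyIndec A) : MatIrred A := by
  intro i j
  by_cases hij : i = j
  · subst hij
    haveI : Nontrivial (Fin n) := Fin.nontrivial_iff_two_le.mpr hn
    obtain ⟨k, hk⟩ := exists_ne i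
    obtain ⟨m1, hm1, hp1⟩ := myReach hA hfi i k (Ne.symm hk)
    obtain ⟨m2, hm2, hp2⟩ := myReach hA hfi k i hk
    refine ⟨m1 + m2, by omega, ?_⟩
    rw [pow_add]
    exact myMulPos (myPowNonneg hA m1) (myPowNonneg hA m2) hp1 hp2
  · exact myReach hA hfi i j hij

lemma myFiTranspose {n : ℕ} {A : Matrix (Fin n) (Fin n) ℝ} (hfi : FullyIndec A) :
    FullyIndec Aᵀ := by
  rintro ⟨S, T, hS, hT, hc, hz⟩
  exact hfi ⟨T, S, hT, hS, by omega, fun i hi j hj => hz j hj i hi⟩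

lemma myFiAtA {n : ℕ} {A : Matrix (Fin n) (Fin n) ℝ}
    (hA : ∀ i j, 0 ≤ A i j) (hfi : FullyIndec A) : FullyIndec (Aᵀ * A) := by
  rintro ⟨S, T, hS, hT, hc, hz⟩
  have hTpos : 0 < T.card := Finset.card_pos.mpr hT
  have key : ∀ i ∈ S, ∀ j ∈ T, ∀ k, A k i * A k j = 0 := by
    intro i hi j hj k
    have h0 := hz i hi j hj
    rw [Matrix.mul_apply] at h0
    have := (Finset.sum_eq_zero_iff_of_nonneg
      (fun l _ => mul_nonneg (hA l i) (hA l j))).mp h0 k (Finset.mem_univ k)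
    exact this
  have hK : S.card < (Finset.univ.filter (fun k => ∃ i ∈ S, Aᵀ i k ≠ 0)).card :=
    myExpand (myFiTranspose hfi) hS (by omega)
  set K := Finset.univ.filter (fun k => ∃ i ∈ S, Aᵀ i k ≠ 0) with hKdef
  obtain ⟨K', hsub, hcard'⟩ := Finset.exists_subset_card_eq (le_of_lt hK)
  apply hfi
  refine ⟨K', T, ?_, hT, by omega, ?_⟩
  · rw [← Finset.card_pos, hcard']
    exact Finset.card_pos.mpr hS
  · intro k hk j hj
    obtain ⟨-, i, hi, hne⟩ := Finset.mem_filter.mp (hsub hk)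
    have hmul := key i hi j hj k
    rcases mul_eq_zero.mp hmul with h1 | h2
    · exact absurd h1 hne
    · exact h2

theorem stmt12 {n : ℕ} (hn : 2 ≤ n) (A : Matrix (Fin n) (Fin n) ℝ)
    (hA : ∀ i j, 0 ≤ A i j) (hfi : FullyIndec A) :
    MatIrred A ∧ MatIrred (Aᵀ * A) := by
  have hAtA : ∀ i j, 0 ≤ (Aᵀ * A) i j := by
    intro i j
    rw [Matrix.mul_apply]
    exact Finset.sum_nonneg fun k _ => mul_nonneg (hA k i) (hA k j)
  exact ⟨myIrred hn hA hfi, myIrred hn hAtA (myFiAtA hA hfi)⟩
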